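/- Let α ∈ (0,1), γ ∈ [0,1), let d : S → ℝ be a probability distribution with d(s) > 0 for all s, D the diagonal matrix of d, P an n×n row-stochastic nonnegative matrix, A = I + α(γ D P − D), and ρ = 1 − α·d_min·(1−γ) with d_min = min_s d(s). Let (W_k) be symmetric positive semidefinite n×n matrices with λ_max(W_k) ≤ 9/(1−γ)² for all k, fix x_0 ∈ ℝ^S, set X_0 = x_0 x_0^T, and define X_{k+1} = A X_k A^T + α² W_k. Then for all k ≥ 0, tr(X_k) ≤ 36 n² α/(d_min (1−γ)³) + ‖x_0‖_2² n² ρ^{2k}. -/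

import Mathlib

open Finset Matrix

/-- The largest eigenvalue of a real matrix: the supremum of the set of its real
eigenvalues.  For a real symmetric matrix this is the usual `λ_max`. -/
noncomputable def lamMax {S : Type*} [Fintype S] (M : Matrix S S ℝ) : ℝ :=
  sSup {μ : ℝ | ∃ v : S → ℝ, v ≠ 0 ∧ M.mulVec v = μ • v}

lemma lamMax_bddAbove {S : Type*} [Fintype S] [Nonempty S] (M : Matrix S S ℝ) :
    BddAbove {μ : ℝ | ∃ v : S → ℝ, v ≠ 0 ∧ M.mulVec v = μ • v} := by
  refine ⟨∑ i, ∑ j, |M i j|, ?_⟩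
  rintro μ ⟨v, hv, hMv⟩
  obtain ⟨i, -, hi⟩ := Finset.exists_max_image Finset.univ (fun i => |v i|)
    ⟨Classical.arbitrary S, Finset.mem_univ _⟩
  have hvi : 0 < |v i| := by
    rcases (abs_nonneg (v i)).lt_or_eq with h | h
    · exact h
    · exfalso; apply hv; funext j
      have := hi j (Finset.mem_univ j)
      have : |v j| ≤ 0 := by linarith [abs_nonneg (v j)]
      simpa using abs_eq_zero.mp (le_antisymm this (abs_nonneg _))
  have key : |μ| * |v i| ≤ (∑ j, |M i j|) * |v i| := by
    have h1 : |μ| * |v i| = |(M.mulVec v) i| := by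
      rw [hMv]; simp [abs_mul]
    rw [h1]
    calc |(M.mulVec v) i| = |∑ j, M i j * v j| := by simp [Matrix.mulVec, dotProduct]
      _ ≤ ∑ j, |M i j * v j| := Finset.abs_sum_le_sum_abs _ _
      _ ≤ ∑ j, |M i j| * |v i| := by
          refine Finset.sum_le_sum fun j _ => ?_
          rw [abs_mul]
          exact mul_le_mul_of_nonneg_left (hi j (Finset.mem_univ j)) (abs_nonneg _)
      _ = (∑ j, |M i j|) * |v i| := by rw [Finset.sum_mul]
  have hμ : |μ| ≤ ∑ j, |M i j| := le_of_mul_le_mul_right key hvi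
  calc μ ≤ |μ| := le_abs_self μ
    _ ≤ ∑ j, |M i j| := hμ
    _ ≤ ∑ i, ∑ j, |M i j| := Finset.single_le_sum
        (f := fun i => ∑ j, |M i j|)
        (fun i _ => Finset.sum_nonneg fun j _ => abs_nonneg _) (Finset.mem_univ i)

lemma eigenvalue_le_lamMax {S : Type*} [Fintype S] [Nonempty S] [DecidableEq S]
    {M : Matrix S S ℝ} (hH : M.IsHermitian) (k : S) :
    hH.eigenvalues k ≤ lamMax M := by
  refine le_csSup (lamMax_bddAbove M) ?_
  exact ⟨hH.eigenvectorBasis k, (by simpa using hH.eigenvectorBasis.orthonormal.ne_zero k),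
    hH.mulVec_eigenvectorBasis k⟩

lemma diag_le_lamMax {S : Type*} [Fintype S] [Nonempty S] [DecidableEq S]
    {W : Matrix S S ℝ} (hW : W.PosSemidef) (i : S) : W i i ≤ lamMax W := by
  have hH := hW.1
  set U : Matrix S S ℝ := (hH.eigenvectorUnitary : Matrix S S ℝ) with hU
  have hUU : U * star U = 1 := (Matrix.mem_unitaryGroup_iff).mp hH.eigenvectorUnitary.2
  have hnorm : ∑ k, (U i k)^2 = 1 := by
    have := congrArg (fun M : Matrix S S ℝ => M i i) hUU
    simpa [Matrix.mul_apply, Matrix.one_apply, pow_two, Matrix.star_apply] using this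
  have hWii : W i i = ∑ k, (U i k)^2 * hH.eigenvalues k := by
    conv_lhs => rw [hH.spectral_theorem, Unitary.conjStarAlgAut_apply]
    rw [Matrix.mul_apply]
    refine Finset.sum_congr rfl fun k _ => ?_
    rw [Matrix.mul_diagonal]
    simp only [Function.comp_apply, RCLike.ofReal_real_eq_id, id_eq,
      Matrix.star_eq_conjTranspose, Matrix.conjTranspose_apply, star_trivial, ← hU]
    ring
  rw [hWii]
  calc ∑ k, (U i k)^2 * hH.eigenvalues k ≤ ∑ k, (U i k)^2 * lamMax W := by
        refine Finset.sum_le_sum fun k _ => ?_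
        exact mul_le_mul_of_nonneg_left (eigenvalue_le_lamMax hH k) (sq_nonneg _)
    _ = lamMax W := by rw [← Finset.sum_mul, hnorm, one_mul]

lemma abs_entry_le_lamMax {S : Type*} [Fintype S] [Nonempty S] [DecidableEq S]
    {W : Matrix S S ℝ} (hW : W.PosSemidef) (i j : S) : |W i j| ≤ lamMax W := by
  have hq : ∀ c : ℝ, 0 ≤ W i i + c * W i j + c * W j i + c^2 * W j j := by
    intro c
    have h := hW.dotProduct_mulVec_nonneg (Pi.single i 1 + Pi.single j c)
    simp only [star_trivial, dotProduct, Matrix.mulVec, Pi.add_apply, Pi.single_apply,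
      mul_add, add_mul, Finset.sum_add_distrib, Finset.mul_sum] at h
    simp [Finset.sum_ite_eq', Finset.mul_sum, mul_add, add_mul,
      Finset.sum_add_distrib] at h
    nlinarith [h]
  have hsym : W j i = W i j := by
    conv_lhs => rw [← hW.1]
    simp [Matrix.conjTranspose_apply]
  have h1 := hq 1
  have h2 := hq (-1)
  have di := diag_le_lamMax hW i
  have dj := diag_le_lamMax hW j
  rw [abs_le]
  constructor <;> nlinarith

/-- **Trace bound of the correlation iterates.**  With `A = I + α(γ D P − D)`,
`ρ = 1 − α·d_min·(1−γ)`, a sequence `W k` of symmetric positive semidefinite matrices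
with `λ_max(W k) ≤ 9/(1−γ)²`, `X 0 = x₀ x₀ᵀ`, and the recursion
`X (k+1) = A (X k) Aᵀ + α² W k`, we have, for all `k`,
`tr(X k) ≤ 36 n² α/(d_min (1−γ)³) + ‖x₀‖₂² n² ρ^{2k}`, where `n = |S|` and
`‖x₀‖₂² = ∑ s, x₀(s)²`. -/
theorem correlation_iterates_trace_bound
    {S : Type*} [Fintype S] [Nonempty S] [DecidableEq S]
    (γ α : ℝ) (hγ0 : 0 ≤ γ) (hγ1 : γ < 1) (hα0 : 0 < α) (hα1 : α < 1)
    (d : S → ℝ) (hd : ∀ s, 0 < d s) (hd1 : ∑ s, d s = 1)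
    (P : Matrix S S ℝ) (hP0 : ∀ i j, 0 ≤ P i j) (hP1 : ∀ i, ∑ j, P i j = 1)
    (A : Matrix S S ℝ)
    (hA : A = 1 + α • (γ • (Matrix.diagonal d * P) - Matrix.diagonal d))
    (ρ : ℝ) (hρ : ρ = 1 - α * (⨅ s : S, d s) * (1 - γ))
    (W : ℕ → Matrix S S ℝ) (hW : ∀ k, (W k).PosSemidef)
    (hWbound : ∀ k, lamMax (W k) ≤ 9 / (1 - γ) ^ 2)
    (x₀ : S → ℝ)
    (X : ℕ → Matrix S S ℝ) (hX0 : X 0 = Matrix.of fun i j => x₀ i * x₀ j)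
    (hXrec : ∀ k, X (k + 1) = A * X k * Aᵀ + (α ^ 2) • W k) :
    ∀ k, (X k).trace ≤
      36 * (Fintype.card S : ℝ) ^ 2 * α / ((⨅ s : S, d s) * (1 - γ) ^ 3) +
        (∑ s, x₀ s ^ 2) * (Fintype.card S : ℝ) ^ 2 * ρ ^ (2 * k) := by
  have hγpos : 0 < 1 - γ := by linarith
  set dm : ℝ := ⨅ s : S, d s with hdm
  have hdm_le : ∀ s, dm ≤ d s := fun s =>
    ciInf_le (Set.Finite.bddBelow (Set.finite_range d)) s
  obtain ⟨s₀, hs₀⟩ := exists_eq_ciInf_of_finite (f := d)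
  have hdm_pos : 0 < dm := by rw [hdm, ← hs₀]; exact hd s₀
  have hd_le1 : ∀ s, d s ≤ 1 := by
    intro s
    rw [← hd1]
    exact Finset.single_le_sum (fun t _ => (hd t).le) (Finset.mem_univ s)
  have hdm1 : dm ≤ 1 := (hdm_le s₀).trans (hd_le1 s₀)
  clear_value dm
  have hρ0 : 0 ≤ ρ := by
    rw [hρ]
    have h6 : α * dm ≤ 1 := mul_le_one₀ hα1.le hdm_pos.le hdm1
    have h7 : α * dm * (1 - γ) ≤ 1 :=
      mul_le_one₀ h6 (by linarith) (by linarith)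
    linarith
  have hρ1 : ρ < 1 := by
    rw [hρ]
    have := mul_pos (mul_pos hα0 hdm_pos) hγpos
    linarith
  -- entries of A
  have hAent : ∀ i j, A i j = (if i = j then 1 - α * d i else 0) + α * γ * (d i * P i j) := by
    intro i j
    rw [hA]
    by_cases h : i = j <;>
      simp [h, Matrix.add_apply, Matrix.smul_apply, Matrix.sub_apply, Matrix.one_apply,
        Matrix.diagonal_apply, Matrix.diagonal_mul, smul_eq_mul] <;> ring
  have hA0 : ∀ i j, 0 ≤ A i j := by
    intro i j
    rw [hAent i j]
    have h1 : 0 ≤ α * γ * (d i * P i j) :=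
      mul_nonneg (mul_nonneg hα0.le hγ0) (mul_nonneg (hd i).le (hP0 i j))
    by_cases h : i = j
    · rw [if_pos h]
      have h2 : α * d i ≤ 1 := by
        nlinarith [mul_nonneg (by linarith : (0:ℝ) ≤ 1 - α) (hd i).le, hd_le1 i]
      linarith
    · rw [if_neg h]; linarith
  have hArow : ∀ i, ∑ j, A i j ≤ ρ := by
    intro i
    have hsum : ∑ j, A i j = 1 - α * d i + α * γ * d i := by
      simp only [hAent]
      rw [Finset.sum_add_distrib, Finset.sum_ite_eq]
      simp only [Finset.mem_univ, if_true]
      have h3 : ∑ j, α * γ * (d i * P i j) = α * γ * d i * ∑ j, P i j := by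
        rw [Finset.mul_sum]; exact Finset.sum_congr rfl fun j _ => by ring
      rw [h3, hP1 i]; ring
    rw [hsum, hρ]
    nlinarith [mul_nonneg (mul_nonneg hα0.le hγpos.le)
      (by linarith [hdm_le i] : (0:ℝ) ≤ d i - dm)]
  have hArow0 : ∀ i, 0 ≤ ∑ j, A i j := fun i =>
    Finset.sum_nonneg fun j _ => hA0 i j
  -- bound on entries of W
  set B : ℝ := 9 / (1 - γ) ^ 2 with hB
  have hB0 : 0 ≤ B := by positivity
  have hWent : ∀ k i j, |W k i j| ≤ B := fun k i j =>
    (abs_entry_le_lamMax (hW k) i j).trans (hWbound k)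
  clear_value B
  -- L² bound on x₀
  set N : ℝ := ∑ s, x₀ s ^ 2 with hN
  have hN0 : 0 ≤ N := Finset.sum_nonneg fun s _ => sq_nonneg _
  have hx0 : ∀ i j, |x₀ i * x₀ j| ≤ N := by
    intro i j
    have hi : x₀ i ^ 2 ≤ N := Finset.single_le_sum
      (f := fun s => x₀ s ^ 2) (fun s _ => sq_nonneg _) (Finset.mem_univ i)
    have hj : x₀ j ^ 2 ≤ N := Finset.single_le_sum
      (f := fun s => x₀ s ^ 2) (fun s _ => sq_nonneg _) (Finset.mem_univ j)
    rw [abs_mul]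
    nlinarith [sq_nonneg (|x₀ i| - |x₀ j|), sq_abs (x₀ i), sq_abs (x₀ j),
      abs_nonneg (x₀ i), abs_nonneg (x₀ j)]
  clear_value N
  set r : ℝ := ρ ^ 2 with hr
  have hr0 : 0 ≤ r := sq_nonneg _
  have hr1 : r < 1 := by rw [hr]; nlinarith
  clear_value r
  -- key entrywise bound
  have key : ∀ k, ∀ i j, |X k i j| ≤
      α ^ 2 * B * (∑ m ∈ Finset.range k, r ^ m) + N * r ^ k := by
    intro k
    induction k with
    | zero =>
      intro i j
      rw [hX0]
      simpa using hx0 i j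
    | succ k ih =>
      intro i j
      set bk : ℝ := α ^ 2 * B * (∑ m ∈ Finset.range k, r ^ m) + N * r ^ k with hbk
      clear_value bk
      have hbk0 : 0 ≤ bk := (abs_nonneg _).trans (ih i j)
      have h1 : (A * X k * Aᵀ) i j = ∑ m, (∑ l, A i l * X k l m) * A j m := by
        simp [Matrix.mul_apply, Matrix.transpose_apply]
      have h2 : |(A * X k * Aᵀ) i j| ≤ ρ * bk * ρ := by
        rw [h1]
        calc |∑ m, (∑ l, A i l * X k l m) * A j m|
            ≤ ∑ m, |(∑ l, A i l * X k l m) * A j m| := Finset.abs_sum_le_sum_abs _ _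
          _ ≤ ∑ m, (ρ * bk) * A j m := by
              refine Finset.sum_le_sum fun m _ => ?_
              rw [abs_mul, abs_of_nonneg (hA0 j m)]
              refine mul_le_mul_of_nonneg_right ?_ (hA0 j m)
              calc |∑ l, A i l * X k l m| ≤ ∑ l, |A i l * X k l m| :=
                    Finset.abs_sum_le_sum_abs _ _
                _ ≤ ∑ l, A i l * bk := by
                    refine Finset.sum_le_sum fun l _ => ?_
                    rw [abs_mul, abs_of_nonneg (hA0 i l)]
                    exact mul_le_mul_of_nonneg_left (ih l m) (hA0 i l)
                _ = (∑ l, A i l) * bk := by rw [Finset.sum_mul]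
                _ ≤ ρ * bk := mul_le_mul_of_nonneg_right (hArow i) hbk0
          _ = (ρ * bk) * (∑ m, A j m) := by rw [Finset.mul_sum]
          _ ≤ (ρ * bk) * ρ := mul_le_mul_of_nonneg_left (hArow j)
              (mul_nonneg hρ0 hbk0)
      have h3 : X (k + 1) i j = (A * X k * Aᵀ) i j + α ^ 2 * W k i j := by
        rw [hXrec k]; simp [Matrix.add_apply, Matrix.smul_apply, smul_eq_mul]
      calc |X (k + 1) i j| ≤ |(A * X k * Aᵀ) i j| + |α ^ 2 * W k i j| := by
            rw [h3]; exact abs_add_le _ _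
        _ ≤ ρ * bk * ρ + α ^ 2 * B := by
            have := hWent k i j
            have h4 : |α ^ 2 * W k i j| = α ^ 2 * |W k i j| := by
              rw [abs_mul, abs_of_nonneg (sq_nonneg α)]
            rw [h4]
            have := mul_le_mul_of_nonneg_left (hWent k i j) (sq_nonneg α)
            linarith
        _ = α ^ 2 * B * (∑ m ∈ Finset.range (k + 1), r ^ m) + N * r ^ (k + 1) := by
            rw [geom_sum_succ, hbk, hr]
            ring
  -- from entrywise bound to the trace bound
  intro k
  set n : ℝ := (Fintype.card S : ℝ) with hn
  have hn1 : 1 ≤ n := by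
    rw [hn]
    exact_mod_cast Fintype.card_pos
  clear_value n
  set Sk : ℝ := ∑ m ∈ Finset.range k, r ^ m with hSk
  have hSk0 : 0 ≤ Sk := Finset.sum_nonneg fun m _ => pow_nonneg hr0 m
  clear_value Sk
  have htr : (X k).trace ≤ n * (α ^ 2 * B * Sk + N * r ^ k) := by
    have : (X k).trace = ∑ i, X k i i := rfl
    rw [this]
    calc ∑ i, X k i i ≤ ∑ i : S, (α ^ 2 * B * Sk + N * r ^ k) := by
          refine Finset.sum_le_sum fun i _ => ?_
          refine (le_abs_self _).trans ?_
          rw [hSk]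
          exact key k i i
      _ = n * (α ^ 2 * B * Sk + N * r ^ k) := by
          rw [Finset.sum_const, Finset.card_univ, nsmul_eq_mul, hn]
  -- geometric sum bound
  have hgeom : Sk * (1 - r) ≤ 1 := by
    have hgm := geom_sum_mul r k
    rw [← hSk] at hgm
    have h5 : Sk * (1 - r) = 1 - r ^ k := by linear_combination -hgm
    rw [h5]
    linarith [pow_nonneg hr0 k]
  have h1r : α * dm * (1 - γ) ≤ 1 - r := by
    have h6 : ρ ^ 2 ≤ ρ := by nlinarith
    rw [hr]
    linarith
  have hSk' : Sk * (α * dm * (1 - γ)) ≤ 1 :=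
    le_trans (mul_le_mul_of_nonneg_left h1r hSk0) hgeom
  -- final arithmetic
  have hrk : r ^ k = ρ ^ (2 * k) := by rw [hr, ← pow_mul]
  have hterm2 : n * (N * r ^ k) ≤ N * n ^ 2 * ρ ^ (2 * k) := by
    rw [hrk]
    have hn2 : n ≤ n ^ 2 := by nlinarith [hn1]
    have ht0 : 0 ≤ N * ρ ^ (2 * k) := mul_nonneg hN0 (pow_nonneg hρ0 (2 * k))
    calc n * (N * ρ ^ (2 * k)) = N * ρ ^ (2 * k) * n := by ring
      _ ≤ N * ρ ^ (2 * k) * n ^ 2 := mul_le_mul_of_nonneg_left hn2 ht0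
      _ = N * n ^ 2 * ρ ^ (2 * k) := by ring
  have hterm1 : n * (α ^ 2 * B * Sk) ≤ 36 * n ^ 2 * α / (dm * (1 - γ) ^ 3) := by
    rw [le_div_iff₀ (by positivity : 0 < dm * (1 - γ) ^ 3)]
    have hBsub : B * (1 - γ) ^ 3 = 9 * (1 - γ) := by
      rw [hB]; field_simp
    have hexp : n * (α ^ 2 * B * Sk) * (dm * (1 - γ) ^ 3)
        = 9 * n * α * (Sk * (α * dm * (1 - γ))) := by
      calc n * (α ^ 2 * B * Sk) * (dm * (1 - γ) ^ 3)
          = n * α ^ 2 * Sk * dm * (B * (1 - γ) ^ 3) := by ring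
        _ = n * α ^ 2 * Sk * dm * (9 * (1 - γ)) := by rw [hBsub]
        _ = 9 * n * α * (Sk * (α * dm * (1 - γ))) := by ring
    rw [hexp]
    have h9 : 9 * n * α * (Sk * (α * dm * (1 - γ))) ≤ 9 * n * α * 1 := by
      refine mul_le_mul_of_nonneg_left hSk' ?_
      positivity
    calc 9 * n * α * (Sk * (α * dm * (1 - γ))) ≤ 9 * n * α * 1 := h9
      _ = 9 * n * α := by ring
      _ ≤ 36 * n ^ 2 * α := by
          have h10 : 0 ≤ α * n * (4 * n - 1) :=
            mul_nonneg (mul_nonneg hα0.le (by linarith)) (by linarith)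
          linarith [h10]
  calc (X k).trace ≤ n * (α ^ 2 * B * Sk + N * r ^ k) := htr
    _ = n * (α ^ 2 * B * Sk) + n * (N * r ^ k) := by ring
    _ ≤ 36 * n ^ 2 * α / (dm * (1 - γ) ^ 3) + N * n ^ 2 * ρ ^ (2 * k) :=
        add_le_add hterm1 hterm2
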